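/- Let x* be a local minimizer of min Σ_i f_i(x) subject to h(x) = 0 with unique Lagrange multiplier ψ* (i.e., ∇f(x*) + ∇h(x*)ψ* = 0), and let x_bold* = 1 ⊗ x* be the corresponding local minimizer of the lifted problem with unique multipliers (μ*, λ*), λ* ∈ Range(S_bold). Then ψ* = μ*. -/

import Mathlib

open Matrix Kronecker

/-- the (unique) Lagrange multiplier `ψ*` of the original problem
coincides with the multiplier `μ*` of the lifted problem. -/
theorem stmt9 (N n : ℕ) (G : SimpleGraph (Fin N)) [DecidableRel G.Adj]
    (hG : G.Connected)
    (s : Fin N → Fin N → ℝ)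
    (hpos : ∀ i j, G.Adj i j → 0 < s i j)
    (hzero : ∀ i j, ¬ G.Adj i j → s i j = 0)
    (S : Matrix {p : Fin N × Fin N // G.Adj p.1 p.2} (Fin N) ℝ)
    (hS : ∀ e l, S e l =
      if l = e.1.1 then s e.1.1 e.1.2
      else if l = e.1.2 then - s e.1.1 e.1.2 else 0)
    (f h : Fin N → (Fin n → ℝ) → ℝ)
    (hf : ∀ i, ContDiff ℝ 2 (f i)) (hh : ∀ i, ContDiff ℝ 2 (h i))
    (xstar : Fin n → ℝ)
    (hli : LinearIndependent ℝ (fun i => fderiv ℝ (h i) xstar))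
    (ψ μ : Fin N → ℝ)
    (lam : {p : Fin N × Fin N // G.Adj p.1 p.2} × Fin n → ℝ)
    (hlam : lam ∈ LinearMap.range (S ⊗ₖ (1 : Matrix (Fin n) (Fin n) ℝ)).mulVecLin)
    (hψ : ∀ k : Fin n,
      fderiv ℝ (fun x => ∑ i, f i x) xstar (Pi.single k 1)
        + ∑ i, ψ i * fderiv ℝ (h i) xstar (Pi.single k 1) = 0)
    (hlift : ∀ p : Fin N × Fin n,
      fderiv ℝ (f p.1) xstar (Pi.single p.2 1)
        + μ p.1 * fderiv ℝ (h p.1) xstar (Pi.single p.2 1)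
        + ((S ⊗ₖ (1 : Matrix (Fin n) (Fin n) ℝ))ᵀ *ᵥ lam) p = 0) :
    ψ = μ := by
  -- rows of S sum to zero
  have hrow : ∀ e, ∑ i, S e i = 0 := by
    intro e
    have hne : e.1.1 ≠ e.1.2 := G.ne_of_adj e.2
    have : ∀ i, S e i =
        (if i = e.1.1 then s e.1.1 e.1.2 else 0)
          + (if i = e.1.2 then - s e.1.1 e.1.2 else 0) := by
      intro i
      rw [hS]
      split_ifs with h1 h2 <;> simp_all
    simp only [this, Finset.sum_add_distrib, Finset.sum_ite_eq',
      Finset.mem_univ, if_true]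
    ring
  -- the column sums of the transposed Kronecker multiplication vanish
  have hcol : ∀ k : Fin n,
      ∑ i, ((S ⊗ₖ (1 : Matrix (Fin n) (Fin n) ℝ))ᵀ *ᵥ lam) (i, k) = 0 := by
    intro k
    have : ∀ i : Fin N, ((S ⊗ₖ (1 : Matrix (Fin n) (Fin n) ℝ))ᵀ *ᵥ lam) (i, k)
        = ∑ q : {p : Fin N × Fin N // G.Adj p.1 p.2} × Fin n,
            S q.1 i * (1 : Matrix (Fin n) (Fin n) ℝ) q.2 k * lam q := by
      intro i
      simp [Matrix.mulVec, dotProduct, kroneckerMap_apply]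
    simp only [this]
    rw [Finset.sum_comm]
    refine Finset.sum_eq_zero fun q _ => ?_
    rw [← Finset.sum_mul, ← Finset.sum_mul, hrow]
    ring
  -- sum the lifted conditions over i
  have hsum : ∀ k : Fin n,
      (∑ i, fderiv ℝ (f i) xstar (Pi.single k 1))
        + ∑ i, μ i * fderiv ℝ (h i) xstar (Pi.single k 1) = 0 := by
    intro k
    have := Finset.sum_congr rfl (fun i (_ : i ∈ Finset.univ) => hlift (i, k))
    simp only [Finset.sum_add_distrib, Finset.sum_const_zero] at this
    rw [hcol k, add_zero] at this
    exact this
  -- fderiv of the sum equals sum of fderiv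
  have hfd : ∀ k : Fin n, fderiv ℝ (fun x => ∑ i, f i x) xstar (Pi.single k 1)
      = ∑ i, fderiv ℝ (f i) xstar (Pi.single k 1) := by
    intro k
    rw [fderiv_fun_sum (fun i _ => ((hf i).differentiable two_ne_zero).differentiableAt)]
    simp
  -- so the two multiplier combinations agree on the basis
  have key : ∀ k : Fin n,
      ∑ i, (ψ i - μ i) * fderiv ℝ (h i) xstar (Pi.single k 1) = 0 := by
    intro k
    have h1 := hψ k
    rw [hfd k] at h1
    have h2 := hsum k
    have := sub_eq_zero.mpr (h1.trans h2.symm)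
    simp only [sub_mul, Finset.sum_sub_distrib]
    linarith [this]
  -- conclude from linear independence
  have hz : ∑ i, (ψ i - μ i) • fderiv ℝ (h i) xstar = 0 := by
    ext x
    have hx : x = ∑ k, Pi.single k (x k) := (Finset.univ_sum_single x).symm
    simp only [ContinuousLinearMap.coe_sum', Finset.sum_apply,
      ContinuousLinearMap.coe_smul', Pi.smul_apply, smul_eq_mul,
      ContinuousLinearMap.zero_apply]
    calc ∑ i, (ψ i - μ i) * fderiv ℝ (h i) xstar x
        = ∑ i, (ψ i - μ i) * ∑ k, x k * fderiv ℝ (h i) xstar (Pi.single k 1) := by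
          refine Finset.sum_congr rfl fun i _ => ?_
          congr 1
          conv_lhs => rw [hx]
          rw [map_sum]
          refine Finset.sum_congr rfl fun k _ => ?_
          have : (Pi.single k (x k) : Fin n → ℝ) = x k • (Pi.single k 1 : Fin n → ℝ) := by
            rw [← Pi.single_smul, smul_eq_mul, mul_one]
          rw [this, ContinuousLinearMap.map_smul, smul_eq_mul]
      _ = ∑ k, x k * ∑ i, (ψ i - μ i) * fderiv ℝ (h i) xstar (Pi.single k 1) := by
          simp_rw [Finset.mul_sum]
          rw [Finset.sum_comm]
          refine Finset.sum_congr rfl fun k _ => ?_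
          refine Finset.sum_congr rfl fun i _ => ?_
          ring
      _ = 0 := by simp [key]
  have := Fintype.linearIndependent_iff.mp hli (fun i => ψ i - μ i) hz
  funext i
  have hi : ψ i - μ i = 0 := this i
  linarith
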